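/- Let π₀ = N(0, σ²I_d), p₀ ∈ (0,1), and δ with ‖δ‖₂ = r > 0. Then max over λ ≥ 0 of (λp₀ − ∫ (λπ₀(z) − π₀(z−δ))₊ dz) = Φ(Φ⁻¹(p₀) − r/σ), achieved at λ̂ = exp((2σrΦ⁻¹(p₀) − r²)/(2σ²)). -/

import Mathlib

open MeasureTheory Real Set

/-- CDF of the one-dimensional standard normal distribution. -/
noncomputable def stdNormalCDF (x : ℝ) : ℝ :=
  ∫ t in Set.Iic x, (Real.sqrt (2 * π))⁻¹ * Real.exp (-t ^ 2 / 2)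



lemma A_eq {σ : ℝ} (hσ : 0 < σ) :
    (2 * π * σ ^ 2) ^ (-(1:ℝ)/2) = (Real.sqrt (2 * π * σ ^ 2))⁻¹ := by
  have h : (0:ℝ) < 2 * π * σ ^ 2 := by positivity
  rw [Real.sqrt_eq_rpow, ← Real.rpow_neg h.le]
  norm_num

lemma g_integrable {σ : ℝ} (hσ : 0 < σ) :
    Integrable (fun x : ℝ => Real.exp (-x ^ 2 / (2 * σ ^ 2))) := by
  have h : (0:ℝ) < 1/(2*σ^2) := by positivity
  have := integrable_exp_neg_mul_sq h
  convert this using 2 with x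
  ring_nf

lemma g_int_one {σ : ℝ} (hσ : 0 < σ) :
    ∫ x : ℝ, (2 * π * σ ^ 2) ^ (-(1:ℝ)/2) * Real.exp (-x ^ 2 / (2 * σ ^ 2)) = 1 := by
  have h : (0:ℝ) < 1/(2*σ^2) := by positivity
  have hint : ∫ x : ℝ, Real.exp (-(1/(2*σ^2)) * x ^ 2) = Real.sqrt (π / (1/(2*σ^2))) :=
    integral_gaussian _
  have heq : ∀ x : ℝ, -x ^ 2 / (2 * σ ^ 2) = -(1/(2*σ^2)) * x ^ 2 := fun x => by ring
  rw [integral_const_mul]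
  simp_rw [heq]
  rw [hint, A_eq hσ]
  rw [inv_mul_eq_div, div_eq_one_iff_eq (by positivity)]
  congr 1
  field_simp

lemma cdf_scale {σ : ℝ} (hσ : 0 < σ) (a : ℝ) :
    ∫ x in Iic a, (2 * π * σ ^ 2) ^ (-(1:ℝ)/2) * Real.exp (-x ^ 2 / (2 * σ ^ 2))
      = stdNormalCDF (a / σ) := by
  set A : ℝ := (2 * π * σ ^ 2) ^ (-(1:ℝ)/2) with hA
  set F : ℝ → ℝ := fun x => indicator (Iic a) (fun x => A * Real.exp (-x ^ 2 / (2 * σ ^ 2))) x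
    with hF
  have h1 : ∫ x in Iic a, A * Real.exp (-x ^ 2 / (2 * σ ^ 2)) = ∫ x, F x :=
    (integral_indicator measurableSet_Iic).symm
  have h2 : (∫ x, F (σ * x)) = |σ⁻¹| • ∫ x, F x := Measure.integral_comp_mul_left F σ
  have h3 : ∀ x : ℝ, F (σ * x)
      = indicator (Iic (a / σ)) (fun x => A * Real.exp (-x ^ 2 / 2)) x := by
    intro x
    have hmem : σ * x ∈ Iic a ↔ x ∈ Iic (a / σ) := by
      simp only [mem_Iic]
      rw [le_div_iff₀ hσ, mul_comm]
    by_cases hx : x ∈ Iic (a / σ)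
    · rw [indicator_of_mem hx, hF]
      simp only [indicator_of_mem (hmem.mpr hx)]
      rw [show -(σ*x) ^ 2 / (2 * σ ^ 2) = -x ^ 2 / 2 from by field_simp]
    · rw [indicator_of_notMem hx, hF]
      exact indicator_of_notMem (fun h => hx (hmem.mp h)) _
  have h4 : σ * A = (Real.sqrt (2 * π))⁻¹ := by
    have h : (0:ℝ) < 2 * π * σ ^ 2 := by positivity
    have hs : Real.sqrt (2 * π * σ ^ 2) = Real.sqrt (2 * π) * σ := by
      rw [Real.sqrt_mul (by positivity), Real.sqrt_sq hσ.le]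
    have hAe : A = (Real.sqrt (2 * π * σ ^ 2))⁻¹ := by
      rw [hA, Real.sqrt_eq_rpow, ← Real.rpow_neg h.le]; norm_num
    rw [hAe, hs, mul_inv, ← mul_assoc, mul_comm σ, mul_assoc,
      mul_inv_cancel₀ hσ.ne', mul_one]
  calc ∫ x in Iic a, A * Real.exp (-x ^ 2 / (2 * σ ^ 2))
      = ∫ x, F x := h1
    _ = σ * ∫ x, F (σ * x) := by
        rw [h2, abs_of_pos (inv_pos.mpr hσ), smul_eq_mul, ← mul_assoc,
          mul_inv_cancel₀ hσ.ne', one_mul]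
    _ = σ * ∫ x in Iic (a / σ), A * Real.exp (-x ^ 2 / 2) := by
        rw [← integral_indicator measurableSet_Iic]
        simp_rw [h3]
    _ = stdNormalCDF (a / σ) := by
        rw [← integral_const_mul, stdNormalCDF]
        congr 1 with x
        rw [← mul_assoc, h4]

lemma oneD {σ r lam t : ℝ} (hσ : 0 < σ) (hr : 0 < r) (hlam : 0 < lam)
    (ht : r * t = σ ^ 2 * Real.log lam + r ^ 2 / 2) :
    ∫ x : ℝ, max (lam * ((2 * π * σ ^ 2) ^ (-(1:ℝ)/2) * Real.exp (-x ^ 2 / (2 * σ ^ 2)))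
        - (2 * π * σ ^ 2) ^ (-(1:ℝ)/2) * Real.exp (-(x - r) ^ 2 / (2 * σ ^ 2))) 0
      = lam * stdNormalCDF (t / σ) - stdNormalCDF ((t - r) / σ) := by
  set A : ℝ := (2 * π * σ ^ 2) ^ (-(1:ℝ)/2) with hA
  have hApos : 0 < A := by rw [hA]; positivity
  set g : ℝ → ℝ := fun x => A * Real.exp (-x ^ 2 / (2 * σ ^ 2)) with hg
  have hgpos : ∀ x, 0 < g x := fun x => by rw [hg]; positivity
  -- ratio identity
  have hratio : ∀ x : ℝ, g (x - r) = g x * Real.exp ((2 * r * x - r ^ 2) / (2 * σ ^ 2)) := by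
    intro x
    rw [hg]
    simp only [mul_assoc, ← Real.exp_add]
    congr 2
    field_simp
    ring
  -- sign criterion
  have hsign : ∀ x : ℝ, (x ≤ t ↔ Real.exp ((2 * r * x - r ^ 2) / (2 * σ ^ 2)) ≤ lam) := by
    intro x
    rw [← Real.exp_log hlam, Real.exp_le_exp, div_le_iff₀ (by positivity)]
    constructor
    · intro h; nlinarith
    · intro h; nlinarith
  -- pointwise indicator identity
  have hpt : ∀ x : ℝ, max (lam * g x - g (x - r)) 0
      = indicator (Iic t) (fun x => lam * g x - g (x - r)) x := by
    intro x
    by_cases hx : x ∈ Iic t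
    · rw [indicator_of_mem hx, max_eq_left]
      rw [hratio, sub_nonneg]
      calc g x * Real.exp ((2 * r * x - r ^ 2) / (2 * σ ^ 2))
          ≤ g x * lam := mul_le_mul_of_nonneg_left ((hsign x).mp hx) (hgpos x).le
        _ = lam * g x := mul_comm _ _
    · rw [indicator_of_notMem hx, max_eq_right]
      rw [hratio, sub_nonpos]
      have hx' : t < x := lt_of_not_ge hx
      have hle : lam ≤ Real.exp ((2 * r * x - r ^ 2) / (2 * σ ^ 2)) := by
        rw [← Real.exp_log hlam, Real.exp_le_exp,
          le_div_iff₀ (by positivity : (0:ℝ) < 2 * σ ^ 2)]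
        nlinarith
      calc lam * g x = g x * lam := mul_comm _ _
        _ ≤ g x * Real.exp ((2 * r * x - r ^ 2) / (2 * σ ^ 2)) :=
            mul_le_mul_of_nonneg_left hle (hgpos x).le
  -- integrability
  have hgint : Integrable g := (g_integrable hσ).const_mul A
  have hgint' : Integrable (fun x => g (x - r)) := hgint.comp_sub_right r
  -- compute
  calc ∫ x : ℝ, max (lam * g x - g (x - r)) 0
      = ∫ x in Iic t, (lam * g x - g (x - r)) := by
        simp_rw [hpt]; exact integral_indicator measurableSet_Iic
    _ = (lam * ∫ x in Iic t, g x) - ∫ x in Iic t, g (x - r) := by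
        rw [integral_sub ((hgint.const_mul lam).integrableOn) hgint'.integrableOn,
          MeasureTheory.integral_const_mul]
    _ = lam * stdNormalCDF (t / σ) - stdNormalCDF ((t - r) / σ) := by
        have e1 : ∫ x in Iic t, g x = stdNormalCDF (t / σ) := cdf_scale hσ t
        have e2 : ∫ x in Iic t, g (x - r) = stdNormalCDF ((t - r) / σ) := by
          have h1 : ∀ x : ℝ, indicator (Iic (t - r)) g (x - r)
              = indicator (Iic t) (fun x => g (x - r)) x := by
            intro x
            by_cases hx : x ∈ Iic t
            · rw [indicator_of_mem hx, indicator_of_mem]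
              simpa using hx
            · rw [indicator_of_notMem hx, indicator_of_notMem]
              simpa using hx
          have : ∫ x in Iic t, g (x - r) = ∫ x in Iic (t - r), g x := by
            rw [← integral_indicator measurableSet_Iic, ← integral_indicator measurableSet_Iic]
            simp_rw [← h1]
            exact integral_sub_right_eq_self (indicator (Iic (t - r)) g) r
          rw [this]
          exact cdf_scale hσ (t - r)
        rw [e1, e2]

lemma dD_reduce {d : ℕ} {σ r lam : ℝ} (hσ : 0 < σ) (hr : 0 < r) (hlam : 0 ≤ lam)
    (δ : EuclideanSpace ℝ (Fin d)) (hδ : ‖δ‖ = r) :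
    ∫ z : EuclideanSpace ℝ (Fin d),
        max (lam * ((2 * π * σ ^ 2) ^ (-(d:ℝ) / 2) * Real.exp (-‖z‖ ^ 2 / (2 * σ ^ 2)))
          - (2 * π * σ ^ 2) ^ (-(d:ℝ) / 2) * Real.exp (-‖z - δ‖ ^ 2 / (2 * σ ^ 2))) 0
      = ∫ x : ℝ, max (lam * ((2 * π * σ ^ 2) ^ (-(1:ℝ)/2) * Real.exp (-x ^ 2 / (2 * σ ^ 2)))
          - (2 * π * σ ^ 2) ^ (-(1:ℝ)/2) * Real.exp (-(x - r) ^ 2 / (2 * σ ^ 2))) 0 := by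
  classical
  -- d is positive
  have hδ0 : δ ≠ 0 := by
    intro h; rw [h, norm_zero] at hδ; exact hr.ne' hδ.symm
  have hd : 0 < d := by
    rcases Nat.eq_zero_or_pos d with h | h
    · exfalso; apply hδ0; subst h; exact Subsingleton.elim _ _
    · exact h
  set i₀ : Fin d := ⟨0, hd⟩
  set A : ℝ := (2 * π * σ ^ 2) ^ (-(1:ℝ)/2) with hA
  have hApos : 0 < A := by rw [hA]; positivity
  set g : ℝ → ℝ := fun x => A * Real.exp (-x ^ 2 / (2 * σ ^ 2)) with hg
  have hgpos : ∀ s : ℝ, 0 < g s := fun s => mul_pos hApos (Real.exp_pos _)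
  set Pz : EuclideanSpace ℝ (Fin d) → ℝ :=
    fun z => (2 * π * σ ^ 2) ^ (-(d:ℝ) / 2) * Real.exp (-‖z‖ ^ 2 / (2 * σ ^ 2)) with hPz
  -- constant power identity
  have hAd : (2 * π * σ ^ 2) ^ (-(d:ℝ) / 2) = A ^ d := by
    rw [hA, ← Real.rpow_natCast ((2 * π * σ ^ 2) ^ (-(1:ℝ)/2)) d,
      ← Real.rpow_mul (by positivity)]
    congr 1
    ring
  -- the unit vectors
  set v : EuclideanSpace ℝ (Fin d) := r⁻¹ • δ with hv
  have hvnorm : ‖v‖ = 1 := by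
    rw [hv, norm_smul, hδ, norm_inv, Real.norm_of_nonneg hr.le, inv_mul_cancel₀ hr.ne']
  set e₀ : EuclideanSpace ℝ (Fin d) := EuclideanSpace.single i₀ 1 with he₀
  have he₀norm : ‖e₀‖ = 1 := by
    rw [he₀, EuclideanSpace.norm_single, norm_one]
  -- the isometry
  set T : EuclideanSpace ℝ (Fin d) ≃ₗᵢ[ℝ] EuclideanSpace ℝ (Fin d) :=
    Submodule.reflection (ℝ ∙ (e₀ - v))ᗮ with hT
  have hTe₀ : T e₀ = v := Submodule.reflection_sub (by rw [he₀norm, hvnorm])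
  have hTδ : T (r • e₀) = δ := by
    rw [T.map_smul, hTe₀, hv, smul_smul, mul_inv_cancel₀ hr.ne', one_smul]
  have hTmp : MeasurePreserving T := T.measurePreserving
  -- change of variables by T
  have step1 : ∫ z : EuclideanSpace ℝ (Fin d), max (lam * Pz z - Pz (z - δ)) 0
      = ∫ w : EuclideanSpace ℝ (Fin d), max (lam * Pz w - Pz (w - r • e₀)) 0 := by
    rw [← hTmp.integral_comp T.toHomeomorph.measurableEmbedding
      (fun z => max (lam * Pz z - Pz (z - δ)) 0)]
    congr 1 with w
    have h1 : Pz (T w) = Pz w := by rw [hPz]; simp only [T.norm_map]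
    have h2 : Pz (T w - δ) = Pz (w - r • e₀) := by
      rw [← hTδ, ← map_sub, hPz]; simp only [T.norm_map]
    rw [h1, h2]
  -- move to the product space
  set e : EuclideanSpace ℝ (Fin d) ≃ᵐ (Fin d → ℝ) := (MeasurableEquiv.toLp 2 (Fin d → ℝ)).symm
    with he
  have hem : MeasurePreserving e.symm := (EuclideanSpace.volume_preserving_symm_measurableEquiv_toLp _).symm
  have hcoord : ∀ (x : Fin d → ℝ) (i : Fin d), (e.symm x) i = x i := fun x i => rfl
  set F : Fin d → ℝ → ℝ := fun i s =>
    if i = i₀ then max (lam * g s - g (s - r)) 0 else g s with hF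
  have step2 : ∫ w : EuclideanSpace ℝ (Fin d), max (lam * Pz w - Pz (w - r • e₀)) 0
      = ∫ x : Fin d → ℝ, ∏ i, F i (x i) := by
    rw [← hem.integral_comp e.symm.measurableEmbedding
      (fun w => max (lam * Pz w - Pz (w - r • e₀)) 0)]
    congr 1 with x
    -- coordinates of the shifted point
    have hsub : ∀ i : Fin d, (e.symm x - r • e₀) i = x i - (if i = i₀ then r else 0) := by
      intro i
      have : (e.symm x - r • e₀) i = (e.symm x) i - r * e₀ i := rfl
      rw [this, hcoord, he₀, EuclideanSpace.single_apply]
      by_cases h : i = i₀ <;> simp [h]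
    -- norms as sums
    have hnorm1 : ‖e.symm x‖ ^ 2 = ∑ i, (x i) ^ 2 := by
      rw [EuclideanSpace.norm_eq, Real.sq_sqrt (by positivity)]
      simp [hcoord]
    have hnorm2 : ‖e.symm x - r • e₀‖ ^ 2 = ∑ i, (x i - (if i = i₀ then r else 0)) ^ 2 := by
      rw [EuclideanSpace.norm_eq, Real.sq_sqrt (by positivity)]
      simp_rw [Real.norm_eq_abs, sq_abs, hsub]
    -- gaussian factorization
    have hfact : ∀ (y : Fin d → ℝ), A ^ d * Real.exp (-(∑ i, (y i) ^ 2) / (2 * σ ^ 2))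
        = ∏ i, g (y i) := by
      intro y
      have h1 : -(∑ i, (y i) ^ 2) / (2 * σ ^ 2) = ∑ i, (-(y i) ^ 2 / (2 * σ ^ 2)) := by
        rw [← Finset.sum_div, ← Finset.sum_neg_distrib]
      rw [h1, Real.exp_sum, hg]
      rw [Finset.prod_mul_distrib, Finset.prod_const, Finset.card_univ, Fintype.card_fin]
    have hPz1 : Pz (e.symm x) = ∏ i, g (x i) := by
      rw [hPz]; simp only []
      rw [hnorm1, hAd]
      exact hfact x
    have hPz2 : Pz (e.symm x - r • e₀) = ∏ i, g (x i - (if i = i₀ then r else 0)) := by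
      rw [hPz]; simp only []
      rw [hnorm2, hAd]
      exact hfact _
    -- peel off coordinate i₀
    set P : ℝ := ∏ i ∈ Finset.univ.erase i₀, g (x i) with hP
    have hPnn : 0 ≤ P := Finset.prod_nonneg fun i _ => (hgpos (x i)).le
    have hprod1 : ∏ i, g (x i) = g (x i₀) * P :=
      (Finset.mul_prod_erase _ _ (Finset.mem_univ i₀)).symm
    have hprod2 : ∏ i, g (x i - if i = i₀ then r else 0) = g (x i₀ - r) * P := by
      rw [← Finset.mul_prod_erase _ _ (Finset.mem_univ i₀), if_pos rfl]
      congr 1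
      refine Finset.prod_congr rfl fun i hi => ?_
      rw [if_neg (Finset.ne_of_mem_erase hi), sub_zero]
    have hFprod : ∏ i, F i (x i) = max (lam * g (x i₀) - g (x i₀ - r)) 0 * P := by
      rw [← Finset.mul_prod_erase _ _ (Finset.mem_univ i₀), hF]
      simp only [if_pos rfl]
      congr 1
      refine Finset.prod_congr rfl fun i hi => ?_
      simp only [if_neg (Finset.ne_of_mem_erase hi)]
    rw [hPz1, hPz2, hprod1, hprod2, hFprod,
      show lam * (g (x i₀) * P) - g (x i₀ - r) * P
        = (lam * g (x i₀) - g (x i₀ - r)) * P by ring,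
      max_mul_of_nonneg _ _ hPnn, zero_mul]
  rw [step1, step2, MeasureTheory.integral_fintype_prod_volume_eq_prod,
    ← Finset.mul_prod_erase _ _ (Finset.mem_univ i₀)]
  have h1 : ∀ i ∈ Finset.univ.erase i₀, (∫ s : ℝ, F i s) = 1 := by
    intro i hi
    have : F i = g := by
      ext s; rw [hF]; simp only [if_neg (Finset.ne_of_mem_erase hi)]
    rw [this]
    exact g_int_one hσ
  rw [Finset.prod_congr rfl h1, Finset.prod_const_one, mul_one, hF]
  simp only [eq_self_iff_true, if_true]
  rfl

noncomputable def stdPhi (x : ℝ) : ℝ := (Real.sqrt (2 * π))⁻¹ * Real.exp (-x ^ 2 / 2)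

lemma stdPhi_pos (x : ℝ) : 0 < stdPhi x := by
  unfold stdPhi
  have : (0:ℝ) < Real.sqrt (2 * π) := Real.sqrt_pos.mpr (by positivity)
  positivity

lemma stdPhi_cont : Continuous stdPhi := by
  unfold stdPhi
  exact continuous_const.mul ((continuous_pow 2).neg.div_const 2).rexp

lemma stdPhi_integrable : Integrable stdPhi := by
  have h : (0:ℝ) < 1/2 := by norm_num
  have := (integrable_exp_neg_mul_sq h).const_mul (Real.sqrt (2 * π))⁻¹
  convert this using 2 with x
  unfold stdPhi
  ring_nf

lemma cdf_sub (a b : ℝ) : stdNormalCDF b - stdNormalCDF a = ∫ x in a..b, stdPhi x := by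
  show (∫ t in Iic b, stdPhi t) - ∫ t in Iic a, stdPhi t = _
  rw [intervalIntegral.integral_Iic_sub_Iic stdPhi_integrable.integrableOn
    stdPhi_integrable.integrableOn]

lemma cdf_hasDeriv (x : ℝ) : HasDerivAt stdNormalCDF (stdPhi x) x := by
  have key : ∀ u : ℝ, stdNormalCDF u = stdNormalCDF 0 + ∫ t in (0:ℝ)..u, stdPhi t := by
    intro u
    rw [← cdf_sub 0 u]; ring
  have hd : HasDerivAt (fun u => stdNormalCDF 0 + ∫ t in (0:ℝ)..u, stdPhi t) (stdPhi x) x := by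
    refine (intervalIntegral.integral_hasDerivAt_right
      stdPhi_integrable.intervalIntegrable
      (stdPhi_cont.stronglyMeasurableAtFilter _ _) stdPhi_cont.continuousAt).const_add _
  exact hd.congr_deriv rfl |>.congr_of_eventuallyEq (Filter.Eventually.of_forall fun u => (key u))
  -- fallback
lemma cdf_strictMono : StrictMono stdNormalCDF := by
  apply strictMono_of_deriv_pos
  intro x
  rw [(cdf_hasDeriv x).deriv]
  exact stdPhi_pos x

lemma cdf_pos (x : ℝ) : 0 < stdNormalCDF x := by
  have h1 : stdNormalCDF x - stdNormalCDF (x - 1) = ∫ t in (x-1)..x, stdPhi t := cdf_sub _ _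
  have h2 : 0 < ∫ t in (x-1)..x, stdPhi t :=
    intervalIntegral.intervalIntegral_pos_of_pos stdPhi_integrable.intervalIntegrable
      (fun t => stdPhi_pos t) (by linarith)
  have h3 : 0 ≤ stdNormalCDF (x - 1) := by
    unfold stdNormalCDF
    apply setIntegral_nonneg measurableSet_Iic
    intro t _
    have : (0:ℝ) < Real.sqrt (2 * π) := Real.sqrt_pos.mpr (by positivity)
    positivity
  linarith

lemma calc_max {σ r p₀ q : ℝ} (hσ : 0 < σ) (hr : 0 < r) (hq : stdNormalCDF q = p₀) (u : ℝ) :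
    Real.exp (r * u / σ - r ^ 2 / (2 * σ ^ 2)) * (p₀ - stdNormalCDF u)
        + stdNormalCDF (u - r / σ)
      ≤ stdNormalCDF (q - r / σ) := by
  set G : ℝ → ℝ := fun u => Real.exp (r * u / σ - r ^ 2 / (2 * σ ^ 2)) * (p₀ - stdNormalCDF u)
      + stdNormalCDF (u - r / σ) with hG
  have hphi : ∀ w : ℝ, stdPhi (w - r / σ)
      = Real.exp (r * w / σ - r ^ 2 / (2 * σ ^ 2)) * stdPhi w := by
    intro w
    unfold stdPhi
    rw [mul_comm (Real.exp _), mul_assoc, ← Real.exp_add]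
    congr 2
    field_simp
    ring
  have hasG : ∀ w : ℝ, HasDerivAt G
      (r / σ * Real.exp (r * w / σ - r ^ 2 / (2 * σ ^ 2)) * (p₀ - stdNormalCDF w)) w := by
    intro w
    have h1 : HasDerivAt (fun u : ℝ => r * u / σ - r ^ 2 / (2 * σ ^ 2)) (r / σ) w := by
      have : HasDerivAt (fun u : ℝ => r * u / σ) (r / σ) w := by
        simpa using (((hasDerivAt_id w).const_mul r).div_const σ)
      simpa using this.sub_const (r ^ 2 / (2 * σ ^ 2))
    have h2 : HasDerivAt (fun u : ℝ => Real.exp (r * u / σ - r ^ 2 / (2 * σ ^ 2)))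
        (Real.exp (r * w / σ - r ^ 2 / (2 * σ ^ 2)) * (r / σ)) w := h1.exp
    have h3 : HasDerivAt (fun u : ℝ => p₀ - stdNormalCDF u) (-stdPhi w) w :=
      (cdf_hasDeriv w).const_sub p₀
    have h4 : HasDerivAt (fun u : ℝ => stdNormalCDF (u - r / σ)) (stdPhi (w - r / σ)) w := by
      have := (cdf_hasDeriv (w - r / σ)).comp w ((hasDerivAt_id w).sub_const (r / σ))
      exact this.congr_deriv (mul_one _)
    have h5 := (h2.mul h3).add h4
    refine HasDerivAt.congr_deriv h5 ?_
    rw [hphi w]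
    ring
  -- monotone up to q, antitone after q
  have mono : MonotoneOn G (Iic q) := by
    apply monotoneOn_of_deriv_nonneg (convex_Iic q)
      (fun w _ => ((hasG w).continuousAt).continuousWithinAt)
      (fun w _ => ((hasG w).differentiableAt).differentiableWithinAt)
    intro w hw
    rw [(hasG w).deriv]
    rw [interior_Iic, mem_Iio] at hw
    have : stdNormalCDF w ≤ p₀ := hq ▸ (cdf_strictMono.monotone hw.le)
    have he : (0:ℝ) < Real.exp (r * w / σ - r ^ 2 / (2 * σ ^ 2)) := Real.exp_pos _
    have hrs : (0:ℝ) < r / σ := div_pos hr hσ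
    exact mul_nonneg (mul_nonneg hrs.le he.le) (sub_nonneg.mpr this)
  have anti : AntitoneOn G (Ici q) := by
    apply antitoneOn_of_deriv_nonpos (convex_Ici q)
      (fun w _ => ((hasG w).continuousAt).continuousWithinAt)
      (fun w _ => ((hasG w).differentiableAt).differentiableWithinAt)
    intro w hw
    rw [(hasG w).deriv]
    rw [interior_Ici, mem_Ioi] at hw
    have : p₀ ≤ stdNormalCDF w := hq ▸ (cdf_strictMono.monotone hw.le)
    have he : (0:ℝ) < Real.exp (r * w / σ - r ^ 2 / (2 * σ ^ 2)) := Real.exp_pos _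
    have hrs : (0:ℝ) < r / σ := div_pos hr hσ
    exact mul_nonpos_of_nonneg_of_nonpos (mul_nonneg hrs.le he.le) (sub_nonpos.mpr this)
  have hGq : G q = stdNormalCDF (q - r / σ) := by
    rw [hG]; simp [hq]
  calc G u ≤ G q := by
        rcases le_total u q with h | h
        · exact mono (mem_Iic.mpr h) (mem_Iic.mpr le_rfl) h
        · exact anti (mem_Ici.mpr le_rfl) (mem_Ici.mpr h) h
    _ = stdNormalCDF (q - r / σ) := hGq

theorem stmt_9 {d : ℕ} (σ r : ℝ) (hσ : 0 < σ) (hr : 0 < r)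
    (π₀ : EuclideanSpace ℝ (Fin d) → ℝ)
    (hπ₀ : π₀ = fun z => (2 * π * σ ^ 2) ^ (-(d:ℝ) / 2) * Real.exp (-‖z‖ ^ 2 / (2 * σ ^ 2)))
    (δ : EuclideanSpace ℝ (Fin d)) (hδ : ‖δ‖ = r)
    (p₀ q : ℝ) (hp₀ : p₀ ∈ Ioo (0:ℝ) 1) (hq : stdNormalCDF q = p₀) :
    IsGreatest
      {v : ℝ | ∃ lam : ℝ, 0 ≤ lam ∧
        v = lam * p₀ - ∫ z, max (lam * π₀ z - π₀ (z - δ)) 0}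
      (stdNormalCDF (q - r / σ)) ∧
    (Real.exp ((2 * σ * r * q - r ^ 2) / (2 * σ ^ 2)) * p₀ -
        ∫ z, max (Real.exp ((2 * σ * r * q - r ^ 2) / (2 * σ ^ 2)) * π₀ z - π₀ (z - δ)) 0)
      = stdNormalCDF (q - r / σ) := by
  have hπ₀pos : ∀ z, 0 < π₀ z := by
    intro z; rw [hπ₀]; positivity
  -- the main parametrized computation
  have main : ∀ u : ℝ,
      (Real.exp (r * u / σ - r ^ 2 / (2 * σ ^ 2)) * p₀
        - ∫ z, max (Real.exp (r * u / σ - r ^ 2 / (2 * σ ^ 2)) * π₀ z - π₀ (z - δ)) 0)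
      = Real.exp (r * u / σ - r ^ 2 / (2 * σ ^ 2)) * (p₀ - stdNormalCDF u)
          + stdNormalCDF (u - r / σ) := by
    intro u
    set lam : ℝ := Real.exp (r * u / σ - r ^ 2 / (2 * σ ^ 2)) with hlam
    have hlampos : 0 < lam := Real.exp_pos _
    have hlog : Real.log lam = r * u / σ - r ^ 2 / (2 * σ ^ 2) := by
      rw [hlam, Real.log_exp]
    have ht : r * (σ * u) = σ ^ 2 * Real.log lam + r ^ 2 / 2 := by
      rw [hlog]; field_simp; ring
    have hint : (∫ z, max (lam * π₀ z - π₀ (z - δ)) 0)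
        = lam * stdNormalCDF (σ * u / σ) - stdNormalCDF ((σ * u - r) / σ) := by
      rw [hπ₀]
      rw [dD_reduce hσ hr hlampos.le δ hδ]
      exact oneD hσ hr hlampos ht
    rw [hint, show σ * u / σ = u by field_simp,
      show (σ * u - r) / σ = u - r / σ by field_simp]
    ring
  have hexp_arg : (2 * σ * r * q - r ^ 2) / (2 * σ ^ 2) = r * q / σ - r ^ 2 / (2 * σ ^ 2) := by
    field_simp
  -- second conjunct
  have second : (Real.exp ((2 * σ * r * q - r ^ 2) / (2 * σ ^ 2)) * p₀ -
        ∫ z, max (Real.exp ((2 * σ * r * q - r ^ 2) / (2 * σ ^ 2)) * π₀ z - π₀ (z - δ)) 0)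
      = stdNormalCDF (q - r / σ) := by
    rw [hexp_arg, main q, hq]
    simp
  refine ⟨⟨⟨Real.exp ((2 * σ * r * q - r ^ 2) / (2 * σ ^ 2)), (Real.exp_pos _).le,
      second.symm⟩, ?_⟩, second⟩
  rintro v ⟨lam, hlam0, rfl⟩
  rcases eq_or_lt_of_le hlam0 with h0 | hpos
  · -- lam = 0
    have : ∀ z : EuclideanSpace ℝ (Fin d),
        max ((0:ℝ) * π₀ z - π₀ (z - δ)) 0 = 0 := by
      intro z
      rw [zero_mul, zero_sub, max_eq_right (neg_nonpos.mpr (hπ₀pos _).le)]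
    have hzero : (∫ z, max ((0:ℝ) * π₀ z - π₀ (z - δ)) 0) = 0 := by
      simp_rw [this]
      exact integral_zero _ _
    rw [← h0, hzero]
    simpa using (cdf_pos (q - r / σ)).le
  · -- lam > 0
    set u : ℝ := (Real.log lam + r ^ 2 / (2 * σ ^ 2)) * σ / r with hu
    have hlam_eq : Real.exp (r * u / σ - r ^ 2 / (2 * σ ^ 2)) = lam := by
      rw [show r * u / σ - r ^ 2 / (2 * σ ^ 2) = Real.log lam by
        rw [hu]; field_simp; ring]
      exact Real.exp_log hpos
    rw [← hlam_eq, main u]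
    exact calc_max hσ hr hq u
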